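/- In F̂_q[SL_n] with coproduct Δ(ρ_ij) = Σ_k ρ_ik ⊗ ρ_kj, for the rescaled generators r_ij := (ρ_ij - δ_ij)/(q-1) one has, for all N ≥ 1, δ_N(r_ij) = (q-1)^{N-1} · Σ_{k_1,…,k_{N-1}} r_{i,k_1} ⊗ r_{k_1,k_2} ⊗ ⋯ ⊗ r_{k_{N-1},j}; consequently (q-1)r_ij = ρ_ij - δ_ij lies in the double-Drinfeld subalgebra, i.e. δ_N((q-1)r_ij) ∈ (q-1)^N F̃_q[SL_n]^{⊗N} for all N. -/

import Mathlib

open TensorProduct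

noncomputable section

universe u
variable (R : Type u) [CommRing R] (H : Type u) [Ring H] [HopfAlgebra R H]

/-- Right-nested tensor power `H ⊗ ⋯ ⊗ H ⊗ R`, bundled to get instances. -/
def TPowM : ℕ → ModuleCat.{u} R
  | 0 => ModuleCat.of R R
  | n+1 => ModuleCat.of R (H ⊗[R] (TPowM n))

abbrev TPow (n : ℕ) : Type u := (TPowM R H n)

/-- Iterated coproduct `Δ^n : H → H^{⊗ n}`. -/
def Delta : ∀ n : ℕ, H →ₗ[R] TPow R H n
  | 0 => Coalgebra.counit
  | n+1 => (TensorProduct.map LinearMap.id (Delta n)) ∘ₗ Coalgebra.comul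

/-- The projection `id - η ∘ ε`. -/
def projKer : H →ₗ[R] H :=
  LinearMap.id - (Algebra.linearMap R H) ∘ₗ Coalgebra.counit

/-- `(id - η∘ε)^{⊗ n}`. -/
def PMap : ∀ n : ℕ, TPow R H n →ₗ[R] TPow R H n
  | 0 => LinearMap.id
  | n+1 => TensorProduct.map (projKer R H) (PMap n)

/-- Drinfeld's map `δ_n := (id - η∘ε)^{⊗ n} ∘ Δ^n`. -/
def ddelta (n : ℕ) : H →ₗ[R] TPow R H n := (PMap R H n) ∘ₗ (Delta R H n)

/-- The embedding `k[q,q⁻¹] → k(q)` sending `q` to `X`. -/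
def iR (k : Type) [Field k] : LaurentPolynomial k →ₐ[k] RatFunc k :=
  (AddMonoidAlgebra.lift k (RatFunc k) ℤ)
    ((Units.coeHom (RatFunc k)).comp
      (zpowersHom (RatFunc k)ˣ (Units.mk0 RatFunc.X RatFunc.X_ne_zero)))

instance (k : Type) [Field k] : Algebra (LaurentPolynomial k) (RatFunc k) :=
  (iR k).toAlgebra

instance (k : Type) [Field k] (F : Type) [Semiring F] [Algebra (RatFunc k) F] :
    Algebra (LaurentPolynomial k) F :=
  RingHom.toAlgebra'
    ((algebraMap (RatFunc k) F).comp (algebraMap (LaurentPolynomial k) (RatFunc k)))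
    (fun c x => Algebra.commutes ((algebraMap (LaurentPolynomial k) (RatFunc k)) c) x)

instance modR (k : Type) [Field k] (M : Type) [AddCommMonoid M]
    [Module (RatFunc k) M] : Module (LaurentPolynomial k) M :=
  Module.compHom M ((iR k) : LaurentPolynomial k →+* RatFunc k)

section SLn

variable (k : Type) [Field k] [CharZero k]
variable (F : Type) [Ring F] [HopfAlgebra (RatFunc k) F]

/-- `Σ_{k_1,…,k_{N-1}} r_{i,k_1} ⊗ r_{k_1,k_2} ⊗ ⋯ ⊗ r_{k_{N-1},j}`. -/
def bigSum {m : ℕ} (rr : Fin m → Fin m → F) :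
    ∀ N : ℕ, Fin m → Fin m → TPow (RatFunc k) F N
  | 0, _, _ => 0
  | 1, i, j => rr i j ⊗ₜ (1 : RatFunc k)
  | N+2, i, j => ∑ l : Fin m, rr i l ⊗ₜ bigSum rr (N+1) l j

/-- The `k[q,q⁻¹]`-submodule `F̃^{⊗N}` of `F_q^{⊗N}` built from a
`k[q,q⁻¹]`-subalgebra `F̃` of `F_q`. -/
def FtPow (S : Subalgebra (LaurentPolynomial k) F) :
    ∀ N : ℕ, Submodule (LaurentPolynomial k) (TPow (RatFunc k) F N)
  | 0 => Submodule.span (LaurentPolynomial k) {(1 : RatFunc k)}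
  | N+1 => Submodule.span (LaurentPolynomial k)
      {t : F ⊗[RatFunc k] TPow (RatFunc k) F N |
        ∃ u ∈ S, ∃ v ∈ FtPow S N, t = u ⊗ₜ v}

end SLn


section MyHelpers
variable (R : Type u) [CommRing R] (H : Type u) [Ring H] [HopfAlgebra R H]

lemma my_ddelta_zero : ddelta R H 0 = (Coalgebra.counit : H →ₗ[R] R) := rfl

lemma my_ddelta_succ (n : ℕ) :
    ddelta R H (n + 1) =
      (TensorProduct.map (projKer R H) (ddelta R H n)).comp
        (Coalgebra.comul : H →ₗ[R] H ⊗[R] H) := by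
  show ((TensorProduct.map (projKer R H) (PMap R H n)).comp
      ((TensorProduct.map LinearMap.id (Delta R H n)).comp Coalgebra.comul)) = _
  rw [← LinearMap.comp_assoc, ← TensorProduct.map_comp]
  rfl

lemma my_projKer_apply (x : H) :
    projKer R H x = x - algebraMap R H (Coalgebra.counit (R := R) x) := rfl

lemma my_projKer_one : projKer R H 1 = 0 := by
  rw [my_projKer_apply, Bialgebra.counit_one, map_one, sub_self]

lemma my_ddelta_one (n : ℕ) : ddelta R H (n + 1) 1 = 0 := by
  rw [my_ddelta_succ]
  show (TensorProduct.map (projKer R H) (ddelta R H n)) (Coalgebra.comul (1 : H)) = 0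
  rw [Bialgebra.comul_one, Algebra.TensorProduct.one_def, TensorProduct.map_tmul, my_projKer_one,
    TensorProduct.zero_tmul]

end MyHelpers
set_option synthInstance.maxHeartbeats 1000000 in
set_option maxHeartbeats 1000000 in
/-- In `F̂_q[SL_n]`, for the rescaled generators `r_ij := (ρ_ij - δ_ij)/(q-1)` one has
`δ_N(r_ij) = (q-1)^{N-1} Σ r_{i,k₁} ⊗ ⋯ ⊗ r_{k_{N-1},j}` for all `N ≥ 1`; consequently
`(q-1)r_ij = ρ_ij - δ_ij` satisfies `δ_N((q-1)r_ij) ∈ (q-1)^N F̃_q[SL_n]^{⊗N}` for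
all `N`, where `F̃_q[SL_n]` is generated by all the `r_ij`. -/
theorem stmt11 (k : Type) [Field k] [CharZero k] (m : ℕ)
    (F : Type) [Ring F] [HopfAlgebra (RatFunc k) F]
    (ρ : Fin m → Fin m → F)
    (q : RatFunc k) (hq : q = RatFunc.X)
    -- relations of `F̂_q[SL_n]`
    (rel1 : ∀ i j l : Fin m, j < l → ρ i j * ρ i l = q • (ρ i l * ρ i j))
    (rel2 : ∀ i h l : Fin m, i < h → ρ i l * ρ h l = q • (ρ h l * ρ i l))
    (rel3 : ∀ i j l t : Fin m, i < j → t < l → ρ i l * ρ j t = ρ j t * ρ i l)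
    (rel4 : ∀ i j l t : Fin m, i < j → l < t →
      ρ i l * ρ j t - ρ j t * ρ i l = (q - q⁻¹) • (ρ i t * ρ j l))
    (hdet : ∑ σ : Equiv.Perm (Fin m),
      ((-q) ^ ((Finset.univ.filter
          (fun p : Fin m × Fin m => p.1 < p.2 ∧ σ p.2 < σ p.1)).card)) •
        (List.ofFn (fun i : Fin m => ρ i (σ i))).prod = 1)
    -- Hopf structure
    (hcρ : ∀ i j : Fin m, Coalgebra.comul (R := RatFunc k) (ρ i j) =
      ∑ l : Fin m, ρ i l ⊗ₜ ρ l j)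
    (heρ : ∀ i j : Fin m, Coalgebra.counit (R := RatFunc k) (ρ i j) =
      if i = j then 1 else 0) :
    -- rescaled generators and the subalgebra they generate
    let r : Fin m → Fin m → F := fun i j =>
      (q - 1)⁻¹ • (ρ i j - if i = j then 1 else 0)
    let Ft : Subalgebra (LaurentPolynomial k) F :=
      Algebra.adjoin (LaurentPolynomial k) {x : F | ∃ i j : Fin m, x = r i j}
    (∀ (N : ℕ) (i j : Fin m),
        ddelta (RatFunc k) F (N+1) (r i j) =
          ((q - 1) ^ N) • bigSum k F r (N+1) i j) ∧
    (∀ (N : ℕ) (i j : Fin m),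
        ∃ y ∈ FtPow k F Ft N,
          ddelta (RatFunc k) F N ((q - 1) • r i j) = ((q - 1) ^ N) • y) := by
  intro r Ft
  have hq1 : q - 1 ≠ 0 := by
    rw [hq]
    intro h
    have h2 := sub_eq_zero.mp h
    rw [← RatFunc.algebraMap_X (K := k),
      ← map_one (algebraMap (Polynomial k) (RatFunc k))] at h2
    have h3 : (Polynomial.X : Polynomial k) = 1 := RatFunc.algebraMap_injective k h2
    simpa [Polynomial.coeff_one] using congrArg (fun p => Polynomial.coeff p 1) h3
  have hrq : ∀ i j : Fin m, (q - 1) • r i j = ρ i j - (if i = j then 1 else 0) :=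
    fun i j => smul_inv_smul₀ hq1 _
  have hdd0 : ∀ x : F, ddelta (RatFunc k) F 0 x = Coalgebra.counit (R := RatFunc k) x :=
    fun _ => rfl
  have hprojρ : ∀ i j : Fin m, projKer (RatFunc k) F (ρ i j) = (q - 1) • r i j := by
    intro i j
    rw [my_projKer_apply, heρ, hrq, apply_ite (algebraMap (RatFunc k) F), map_one, map_zero]
  have hddρ : ∀ (N : ℕ) (i j : Fin m),
      ddelta (RatFunc k) F (N+1) (ρ i j) = ((q - 1) ^ (N+1)) • bigSum k F r (N+1) i j := by
    intro N
    induction N with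
    | zero =>
      intro i j
      rw [my_ddelta_succ]
      show (TensorProduct.map (projKer (RatFunc k) F) (ddelta (RatFunc k) F 0))
        (Coalgebra.comul (ρ i j)) = _
      rw [hcρ, map_sum]
      have hterm : ∀ l : Fin m,
          (TensorProduct.map (projKer (RatFunc k) F) (ddelta (RatFunc k) F 0))
            (ρ i l ⊗ₜ ρ l j)
          = if l = j then ((q - 1) • r i l) ⊗ₜ (1 : RatFunc k) else 0 := by
        intro l
        rw [TensorProduct.map_tmul, hprojρ, hdd0, heρ]
        by_cases h : l = j <;> simp [h, TensorProduct.tmul_zero]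
        · rfl
        · exact TensorProduct.tmul_zero (R := RatFunc k) (M := F) (TPow (RatFunc k) F 0) _
      rw [Finset.sum_congr rfl (fun l _ => hterm l)]
      erw [Finset.sum_ite_eq' Finset.univ j]
      simp only [Finset.mem_univ, if_true]
      show ((q - 1) • r i j) ⊗ₜ[RatFunc k] ((1 : RatFunc k) : TPow (RatFunc k) F 0) = ((q - 1) ^ 1) • (r i j ⊗ₜ[RatFunc k] ((1 : RatFunc k) : TPow (RatFunc k) F 0))
      rw [pow_one]
      exact (TensorProduct.smul_tmul' _ _ _).symm
    | succ N IH =>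
      intro i j
      rw [my_ddelta_succ]
      show (TensorProduct.map (projKer (RatFunc k) F) (ddelta (RatFunc k) F (N+1)))
        (Coalgebra.comul (ρ i j)) = _
      rw [hcρ, map_sum]
      have hterm : ∀ l : Fin m,
          (TensorProduct.map (projKer (RatFunc k) F) (ddelta (RatFunc k) F (N+1)))
            (ρ i l ⊗ₜ ρ l j)
          = ((q - 1) ^ (N+2)) • (r i l ⊗ₜ bigSum k F r (N+1) l j) := by
        intro l
        rw [TensorProduct.map_tmul, hprojρ, IH l j]
        calc ((q - 1) • r i l) ⊗ₜ[RatFunc k] ((q - 1) ^ (N+1) • bigSum k F r (N + 1) l j)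
            = (q - 1) • (r i l ⊗ₜ[RatFunc k] ((q - 1) ^ (N+1) • bigSum k F r (N + 1) l j)) :=
              (TensorProduct.smul_tmul' _ _ _).symm
          _ = (q - 1) • ((q - 1) ^ (N+1)) • (r i l ⊗ₜ[RatFunc k] bigSum k F r (N + 1) l j) := by
              rw [TensorProduct.tmul_smul]
          _ = ((q - 1) * (q - 1) ^ (N+1)) • (r i l ⊗ₜ[RatFunc k] bigSum k F r (N + 1) l j) :=
              smul_smul _ _ _
          _ = ((q - 1) ^ (N+2)) • (r i l ⊗ₜ[RatFunc k] bigSum k F r (N + 1) l j) := by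
              rw [← pow_succ']
      rw [Finset.sum_congr rfl (fun l _ => hterm l), ← Finset.smul_sum]
      rfl
  have main1 : ∀ (N : ℕ) (i j : Fin m),
      ddelta (RatFunc k) F (N+1) (r i j) = ((q - 1) ^ N) • bigSum k F r (N+1) i j := by
    intro N i j
    have h1 : r i j = (q - 1)⁻¹ • (ρ i j - (if i = j then 1 else 0)) := rfl
    have h2 : ddelta (RatFunc k) F (N+1) ((if i = j then (1:F) else 0)) = 0 := by
      split
      · exact my_ddelta_one _ _ _
      · exact map_zero _
    rw [h1, map_smul, map_sub, hddρ, h2, sub_zero, smul_smul, pow_succ', ← mul_assoc,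
      inv_mul_cancel₀ hq1, one_mul]
  have hmem : ∀ (N : ℕ) (i j : Fin m), bigSum k F r (N+1) i j ∈ FtPow k F Ft (N+1) := by
    intro N
    induction N with
    | zero =>
      intro i j
      show (r i j ⊗ₜ[RatFunc k] ((1 : RatFunc k) : TPow (RatFunc k) F 0)) ∈ FtPow k F Ft 1
      exact Submodule.subset_span
        ⟨r i j, Algebra.subset_adjoin ⟨i, j, rfl⟩, (1 : RatFunc k),
          Submodule.subset_span rfl, rfl⟩
    | succ N IH =>
      intro i j
      show (∑ l : Fin m, r i l ⊗ₜ bigSum k F r (N+1) l j) ∈ FtPow k F Ft (N+2)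
      exact Submodule.sum_mem _ (fun l _ => Submodule.subset_span (R := LaurentPolynomial k) (M := TPow (RatFunc k) F (N+2))
        ⟨r i l, Algebra.subset_adjoin ⟨i, l, rfl⟩, bigSum k F r (N+1) l j, IH l j, rfl⟩)
  refine ⟨main1, ?_⟩
  intro N i j
  cases N with
  | zero =>
    refine ⟨0, Submodule.zero_mem _, ?_⟩
    have hcr : Coalgebra.counit (R := RatFunc k) (r i j) = 0 := by
      show Coalgebra.counit ((q - 1)⁻¹ • (ρ i j - (if i = j then 1 else 0))) = 0
      rw [map_smul, map_sub, heρ]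
      split <;> simp [Bialgebra.counit_one]
    rw [map_smul, hdd0, hcr, smul_zero]
    exact (smul_zero (q - 1) : (q - 1) • (0 : RatFunc k) = 0)
  | succ N =>
    exact ⟨bigSum k F r (N+1) i j, hmem N i j, by
      rw [map_smul, main1, smul_smul, ← pow_succ']⟩

end
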